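/- For every $m$ with $-N < m \leq 0$ and every $c, k, t > 0$, the function $G(x) = \int_{\mathbb{R}^N} \exp(-c|x-y|^k/t)\,|y|^m \, dy$ satisfies $G(x) \leq G(0)$ for all $x \in \mathbb{R}^N$. -/

import Mathlib

open Real MeasureTheory Metric Set Filter

section Aux

variable {N : ℕ}

local notation "E" => EuclideanSpace ℝ (Fin N)

/-- Measure bound for superlevel sets of `‖·‖ ^ s` with `s < 0`. -/
lemma meas_rpow_le {s tt : ℝ} (hs : s < 0) (ht : 0 < tt) (S : Set (EuclideanSpace ℝ (Fin N))) :
    (volume.restrict S) {a : E | tt ≤ ‖a‖ ^ s}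
      ≤ ENNReal.ofReal (tt ^ (s⁻¹ * N)) * volume (ball (0 : E) 1) := by
  have hsub : {a : E | tt ≤ ‖a‖ ^ s} ⊆ closedBall (0 : E) (tt ^ s⁻¹) := by
    intro a ha
    simp only [mem_setOf_eq] at ha
    rcases eq_or_ne a 0 with rfl | h0
    · rw [norm_zero, Real.zero_rpow hs.ne] at ha; linarith
    · have hna : 0 < ‖a‖ := norm_pos_iff.2 h0
      have h2 := Real.rpow_le_rpow_of_nonpos ht ha (inv_nonpos.2 hs.le)
      rw [mem_closedBall_zero_iff]
      calc ‖a‖ = (‖a‖ ^ s) ^ s⁻¹ := by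
            rw [← Real.rpow_mul (norm_nonneg a), mul_inv_cancel₀ hs.ne, Real.rpow_one]
        _ ≤ tt ^ s⁻¹ := h2
  calc (volume.restrict S) {a : E | tt ≤ ‖a‖ ^ s}
      ≤ volume {a : E | tt ≤ ‖a‖ ^ s} := Measure.restrict_apply_le _ _
    _ ≤ volume (closedBall (0 : E) (tt ^ s⁻¹)) := measure_mono hsub
    _ = ENNReal.ofReal ((tt ^ s⁻¹) ^ Module.finrank ℝ (EuclideanSpace ℝ (Fin N)))
          * volume (ball (0 : E) 1) :=
        Measure.addHaar_closedBall _ _ (Real.rpow_nonneg ht.le _)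
    _ = _ := by
        rw [finrank_euclideanSpace, Fintype.card_fin,
          ← Real.rpow_natCast (tt ^ s⁻¹) N, ← Real.rpow_mul ht.le]

lemma finite_inner {m : ℝ} (hm1 : -(N : ℝ) < m) (hm2 : m ≤ 0) :
    ∫⁻ y in ball (0 : E) 1, ENNReal.ofReal (‖y‖ ^ m) < ⊤ := by
  rcases hm2.eq_or_lt with rfl | hm0
  · simp only [Real.rpow_zero, ENNReal.ofReal_one]
    simp [lintegral_const]
    exact measure_ball_lt_top
  have hmeas : Measurable fun y : E => ‖y‖ ^ m := by fun_prop
  rw [lintegral_eq_lintegral_meas_le _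
    (Eventually.of_forall fun y => Real.rpow_nonneg (norm_nonneg y) m) hmeas.aemeasurable]
  have hmB : volume (ball (0 : E) 1) < ⊤ := measure_ball_lt_top
  calc ∫⁻ s in Ioi (0:ℝ), (volume.restrict (ball (0:E) 1)) {a : E | s ≤ ‖a‖ ^ m}
      ≤ ∫⁻ s in Ioc (0:ℝ) 1 ∪ Ioi 1, (volume.restrict (ball (0:E) 1)) {a : E | s ≤ ‖a‖ ^ m} :=
        lintegral_mono_set Ioi_subset_Ioc_union_Ioi
    _ ≤ (∫⁻ s in Ioc (0:ℝ) 1, (volume.restrict (ball (0:E) 1)) {a : E | s ≤ ‖a‖ ^ m})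
        + ∫⁻ s in Ioi (1:ℝ), (volume.restrict (ball (0:E) 1)) {a : E | s ≤ ‖a‖ ^ m} :=
        lintegral_union_le _ _ _
    _ < ⊤ := ENNReal.add_lt_top.2 ⟨?_, ?_⟩
  · calc (∫⁻ _ in Ioc (0:ℝ) 1, (volume.restrict (ball (0:E) 1)) {a : E | _ ≤ ‖a‖ ^ m})
        ≤ ∫⁻ _ in Ioc (0:ℝ) 1, volume (ball (0:E) 1) := by
          refine setLIntegral_mono' measurableSet_Ioc fun s _ => ?_
          exact le_trans (measure_mono (subset_univ _)) (by rw [Measure.restrict_apply_univ])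
      _ = volume (ball (0:E) 1) * volume (Ioc (0:ℝ) 1) := setLIntegral_const _ _
      _ < ⊤ := by
          rw [Real.volume_Ioc]
          exact ENNReal.mul_lt_top hmB ENNReal.ofReal_lt_top
  · have he : m⁻¹ * (N : ℝ) < -1 := by
      have h1 : m⁻¹ < 0 := inv_neg''.mpr hm0
      have h2 : m⁻¹ * ((N : ℝ) + m) < 0 :=
        mul_neg_of_neg_of_pos h1 (by linarith)
      have h3 : m⁻¹ * ((N : ℝ) + m) = m⁻¹ * N + 1 := by
        rw [mul_add, inv_mul_cancel₀ hm0.ne]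
      linarith
    calc ∫⁻ s in Ioi (1:ℝ), (volume.restrict (ball (0:E) 1)) {a : E | s ≤ ‖a‖ ^ m}
        ≤ ∫⁻ s in Ioi (1:ℝ), ENNReal.ofReal (s ^ (m⁻¹ * N)) * volume (ball (0:E) 1) :=
          setLIntegral_mono' measurableSet_Ioi fun s hs =>
            meas_rpow_le hm0 (lt_trans one_pos hs) _
      _ = (∫⁻ s in Ioi (1:ℝ), ENNReal.ofReal (s ^ (m⁻¹ * N))) * volume (ball (0:E) 1) :=
          lintegral_mul_const' _ _ hmB.ne
      _ < ⊤ := ENNReal.mul_lt_top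
          ((integrableOn_Ioi_rpow_of_lt he one_pos).setLIntegral_lt_top) hmB

lemma finite_outer {s : ℝ} (hs : s < -(N : ℝ)) :
    ∫⁻ y in (ball (0 : E) 1)ᶜ, ENNReal.ofReal (‖y‖ ^ s) < ⊤ := by
  have hs0 : s < 0 := lt_of_lt_of_le hs (by simp [Nat.cast_nonneg])
  have hmeas : Measurable fun y : E => ‖y‖ ^ s := by fun_prop
  rw [lintegral_eq_lintegral_meas_le _
    (Eventually.of_forall fun y => Real.rpow_nonneg (norm_nonneg y) s) hmeas.aemeasurable]
  have hmB : volume (ball (0 : E) 1) < ⊤ := measure_ball_lt_top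
  calc ∫⁻ u in Ioi (0:ℝ), (volume.restrict (ball (0:E) 1)ᶜ) {a : E | u ≤ ‖a‖ ^ s}
      ≤ ∫⁻ u in Ioc (0:ℝ) 1 ∪ Ioi 1, (volume.restrict (ball (0:E) 1)ᶜ) {a : E | u ≤ ‖a‖ ^ s} :=
        lintegral_mono_set Ioi_subset_Ioc_union_Ioi
    _ ≤ (∫⁻ u in Ioc (0:ℝ) 1, (volume.restrict (ball (0:E) 1)ᶜ) {a : E | u ≤ ‖a‖ ^ s})
        + ∫⁻ u in Ioi (1:ℝ), (volume.restrict (ball (0:E) 1)ᶜ) {a : E | u ≤ ‖a‖ ^ s} :=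
        lintegral_union_le _ _ _
    _ < ⊤ := ENNReal.add_lt_top.2 ⟨?_, ?_⟩
  · have he : -1 < s⁻¹ * (N : ℝ) := by
      have h1 : s⁻¹ < 0 := inv_neg''.mpr hs0
      have h2 : 0 < s⁻¹ * ((N : ℝ) + s) :=
        mul_pos_of_neg_of_neg h1 (by linarith)
      have h3 : s⁻¹ * ((N : ℝ) + s) = s⁻¹ * N + 1 := by
        rw [mul_add, inv_mul_cancel₀ hs0.ne]
      linarith
    have hint : IntegrableOn (fun u : ℝ => u ^ (s⁻¹ * (N:ℝ))) (Ioc (0:ℝ) 1) := by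
      rw [← intervalIntegrable_iff_integrableOn_Ioc_of_le zero_le_one]
      exact intervalIntegral.intervalIntegrable_rpow' he
    calc (∫⁻ u in Ioc (0:ℝ) 1, (volume.restrict (ball (0:E) 1)ᶜ) {a : E | u ≤ ‖a‖ ^ s})
        ≤ ∫⁻ u in Ioc (0:ℝ) 1, ENNReal.ofReal (u ^ (s⁻¹ * N)) * volume (ball (0:E) 1) :=
          setLIntegral_mono' measurableSet_Ioc fun u hu =>
            meas_rpow_le hs0 hu.1 _
      _ = (∫⁻ u in Ioc (0:ℝ) 1, ENNReal.ofReal (u ^ (s⁻¹ * N))) * volume (ball (0:E) 1) :=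
          lintegral_mul_const' _ _ hmB.ne
      _ < ⊤ := ENNReal.mul_lt_top hint.setLIntegral_lt_top hmB
  · have hzero : ∀ u ∈ Ioi (1:ℝ), (volume.restrict (ball (0:E) 1)ᶜ) {a : E | u ≤ ‖a‖ ^ s} = 0 := by
      intro u hu
      rw [Measure.restrict_apply' measurableSet_ball.compl]
      have hempty : {a : E | u ≤ ‖a‖ ^ s} ∩ (ball (0:E) 1)ᶜ = (∅ : Set (EuclideanSpace ℝ (Fin N))) := by
        ext a
        simp only [mem_inter_iff, mem_setOf_eq, mem_compl_iff, mem_ball, dist_zero_right,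
          not_lt, mem_empty_iff_false, iff_false, not_and]
        intro hua hna
        have : ‖a‖ ^ s ≤ 1 := Real.rpow_le_one_of_one_le_of_nonpos hna hs0.le
        linarith [mem_Ioi.1 hu]
      rw [hempty, measure_empty]
    rw [setLIntegral_congr_fun measurableSet_Ioi hzero]
    simp

lemma exp_bound (b kk : ℝ) (hb : 0 < b) (hk : 0 < kk) :
    ∃ (j : ℕ) (D : ℝ), (N : ℝ) < kk * j ∧ 0 ≤ D ∧
      ∀ r : ℝ, 1 ≤ r → Real.exp (-(b * r ^ kk)) ≤ D * r ^ (-(kk * j)) := by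
  obtain ⟨j, hj⟩ := exists_nat_gt ((N : ℝ) / kk)
  refine ⟨j, j.factorial / b ^ j, ?_, by positivity, ?_⟩
  · rw [div_lt_iff₀ hk] at hj; linarith
  · intro r hr
    have hr0 : (0:ℝ) < r := lt_of_lt_of_le one_pos hr
    have hX : 0 < b * r ^ kk := by positivity
    have hexp : (b * r ^ kk) ^ j / (j.factorial : ℝ) ≤ Real.exp (b * r ^ kk) := by
      calc (b * r ^ kk) ^ j / (j.factorial : ℝ)
          ≤ ∑ i ∈ Finset.range (j+1), (b * r ^ kk) ^ i / (i.factorial : ℝ) :=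
            Finset.single_le_sum (f := fun i => (b * r ^ kk) ^ i / (i.factorial : ℝ))
              (fun i _ => by positivity) (Finset.self_mem_range_succ j)
        _ ≤ Real.exp (b * r ^ kk) := Real.sum_le_exp_of_nonneg hX.le _
    rw [Real.exp_neg]
    have h2 : (Real.exp (b * r ^ kk))⁻¹ ≤ ((b * r ^ kk) ^ j / (j.factorial : ℝ))⁻¹ :=
      inv_anti₀ (by positivity) hexp
    refine h2.trans (le_of_eq ?_)
    have h3 : (r ^ kk) ^ j = r ^ (kk * (j:ℝ)) := by
      rw [← Real.rpow_natCast (r ^ kk) j, ← Real.rpow_mul hr0.le]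
    rw [inv_div, mul_pow, h3, Real.rpow_neg hr0.le, div_mul_eq_div_div, div_eq_mul_inv _ (r ^ (kk * (j:ℝ)))]

lemma finite_L2 (m c k t : ℝ) (hm1 : -(N : ℝ) < m) (hm2 : m ≤ 0)
    (hc : 0 < c) (hk : 0 < k) (ht : 0 < t) :
    ∫⁻ y : E, ENNReal.ofReal (Real.exp (-c * ‖y‖ ^ k / t) * ‖y‖ ^ m) < ⊤ := by
  rw [← lintegral_add_compl (fun y : E => ENNReal.ofReal (Real.exp (-c * ‖y‖ ^ k / t) * ‖y‖ ^ m))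
    (measurableSet_ball (x := (0:E)) (ε := 1))]
  refine ENNReal.add_lt_top.2 ⟨?_, ?_⟩
  · refine lt_of_le_of_lt ?_ (finite_inner hm1 hm2)
    refine lintegral_mono fun y => ENNReal.ofReal_le_ofReal ?_
    have hexp : Real.exp (-c * ‖y‖ ^ k / t) ≤ 1 := by
      rw [Real.exp_le_one_iff]
      have : 0 ≤ ‖y‖ ^ k := Real.rpow_nonneg (norm_nonneg y) k
      have hct : 0 ≤ c * ‖y‖ ^ k := by positivity
      rw [neg_mul]
      exact div_nonpos_of_nonpos_of_nonneg (by linarith) ht.le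
    exact mul_le_of_le_one_left (Real.rpow_nonneg (norm_nonneg y) m) hexp
  · obtain ⟨j, D, hj, hD, hbound⟩ := exp_bound (N := N) (c/t) k (div_pos hc ht) hk
    have hs : -(k * (j:ℝ)) < -(N : ℝ) := by linarith
    calc ∫⁻ y in (ball (0:E) 1)ᶜ, ENNReal.ofReal (Real.exp (-c * ‖y‖ ^ k / t) * ‖y‖ ^ m)
        ≤ ∫⁻ y in (ball (0:E) 1)ᶜ, ENNReal.ofReal D * ENNReal.ofReal (‖y‖ ^ (-(k * (j:ℝ)))) := by
          refine setLIntegral_mono' measurableSet_ball.compl fun y hy => ?_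
          have h1 : (1:ℝ) ≤ ‖y‖ := by
            simpa [mem_compl_iff, mem_ball, dist_zero_right, not_lt] using hy
          rw [← ENNReal.ofReal_mul hD]
          refine ENNReal.ofReal_le_ofReal ?_
          have hg1 : ‖y‖ ^ m ≤ 1 := Real.rpow_le_one_of_one_le_of_nonpos h1 hm2
          have he : Real.exp (-c * ‖y‖ ^ k / t) ≤ D * ‖y‖ ^ (-(k * (j:ℝ))) := by
            have : -c * ‖y‖ ^ k / t = -(c / t * ‖y‖ ^ k) := by ring
            rw [this]
            exact hbound _ h1
          calc Real.exp (-c * ‖y‖ ^ k / t) * ‖y‖ ^ m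
              ≤ Real.exp (-c * ‖y‖ ^ k / t) * 1 := by
                exact mul_le_mul_of_nonneg_left hg1 (Real.exp_pos _).le
            _ = Real.exp (-c * ‖y‖ ^ k / t) := mul_one _
            _ ≤ D * ‖y‖ ^ (-(k * (j:ℝ))) := he
      _ = ENNReal.ofReal D * ∫⁻ y in (ball (0:E) 1)ᶜ, ENNReal.ofReal (‖y‖ ^ (-(k * (j:ℝ)))) :=
          lintegral_const_mul' _ _ ENNReal.ofReal_ne_top
      _ < ⊤ := ENNReal.mul_lt_top ENNReal.ofReal_lt_top (finite_outer hs)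

lemma aux_point (c k t m : ℝ) (hc : 0 < c) (hk : 0 < k) (ht : 0 < t) (hm : m ≤ 0)
    {A B : ℝ} (hA : 0 < A) (hAB : A ≤ B) :
    Real.exp (-c * B ^ k / t) * A ^ m + Real.exp (-c * A ^ k / t) * B ^ m ≤
      Real.exp (-c * A ^ k / t) * A ^ m + Real.exp (-c * B ^ k / t) * B ^ m := by
  have h1 : Real.exp (-c * B ^ k / t) ≤ Real.exp (-c * A ^ k / t) := by
    apply Real.exp_le_exp.2
    have hr : A ^ k ≤ B ^ k := Real.rpow_le_rpow hA.le hAB hk.le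
    have h2 : -c * B ^ k ≤ -c * A ^ k := by nlinarith
    gcongr
  have h2 : B ^ m ≤ A ^ m := Real.rpow_le_rpow_of_nonpos hA hAB hm
  nlinarith [mul_nonneg (sub_nonneg.2 h1) (sub_nonneg.2 h2)]



/-- The function `G(x) = ∫ exp(-c‖x-y‖^k/t) ‖y‖^m dy` on `ℝ^N` attains its
maximum at `x = 0`, for `-N < m ≤ 0` and `c, k, t > 0`. -/
theorem rearrangement_max_at_zero (N : ℕ) (m c k t : ℝ)
    (hm1 : -(N : ℝ) < m) (hm2 : m ≤ 0) (hc : 0 < c) (hk : 0 < k) (ht : 0 < t)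
    (x : EuclideanSpace ℝ (Fin N)) :
    (∫ y : EuclideanSpace ℝ (Fin N), Real.exp (-c * ‖x - y‖ ^ k / t) * ‖y‖ ^ m) ≤
    (∫ y : EuclideanSpace ℝ (Fin N), Real.exp (-c * ‖(0 : EuclideanSpace ℝ (Fin N)) - y‖ ^ k / t) * ‖y‖ ^ m) := by
  rcases Nat.eq_zero_or_pos N with hN | hN
  · subst hN
    haveI : Subsingleton (EuclideanSpace ℝ (Fin 0)) := ⟨fun a b => by ext i; exact Fin.elim0 i⟩
    rw [Subsingleton.elim x 0]
  haveI : Nonempty (Fin N) := ⟨⟨0, hN⟩⟩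
  haveI : Inhabited (Fin N) := ⟨⟨0, hN⟩⟩
  haveI : Nontrivial (EuclideanSpace ℝ (Fin N)) := inferInstance
  haveI : NullSingletonClass (volume : Measure (EuclideanSpace ℝ (Fin N))) := by infer_instance
  simp only [zero_sub, norm_neg]
  -- measurability
  have hmF : Measurable fun z : EuclideanSpace ℝ (Fin N) => Real.exp (-c * ‖z‖ ^ k / t) := by
    fun_prop
  have hmg : Measurable fun z : EuclideanSpace ℝ (Fin N) => ‖z‖ ^ m := by fun_prop
  have hmsub : Measurable fun y : EuclideanSpace ℝ (Fin N) => x - y :=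
    measurable_const.sub measurable_id
  have hm1' : Measurable fun y : EuclideanSpace ℝ (Fin N) =>
      Real.exp (-c * ‖x - y‖ ^ k / t) * ‖y‖ ^ m := (hmF.comp hmsub).mul hmg
  have hm2' : Measurable fun y : EuclideanSpace ℝ (Fin N) =>
      Real.exp (-c * ‖y‖ ^ k / t) * ‖x - y‖ ^ m := hmF.mul (hmg.comp hmsub)
  have hm3' : Measurable fun y : EuclideanSpace ℝ (Fin N) =>
      Real.exp (-c * ‖y‖ ^ k / t) * ‖y‖ ^ m := hmF.mul hmg
  have hnn : ∀ (a : EuclideanSpace ℝ (Fin N)) (b : EuclideanSpace ℝ (Fin N)),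
      0 ≤ Real.exp (-c * ‖a‖ ^ k / t) * ‖b‖ ^ m :=
    fun a b => mul_nonneg (Real.exp_pos _).le (Real.rpow_nonneg (norm_nonneg b) m)
  rw [integral_eq_lintegral_of_nonneg_ae (Eventually.of_forall fun y => hnn _ _)
    hm1'.aestronglyMeasurable,
    integral_eq_lintegral_of_nonneg_ae (Eventually.of_forall fun y => hnn _ _)
    hm3'.aestronglyMeasurable]
  set L1 := ∫⁻ y : EuclideanSpace ℝ (Fin N),
    ENNReal.ofReal (Real.exp (-c * ‖x - y‖ ^ k / t) * ‖y‖ ^ m) with hL1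
  set L2 := ∫⁻ y : EuclideanSpace ℝ (Fin N),
    ENNReal.ofReal (Real.exp (-c * ‖y‖ ^ k / t) * ‖y‖ ^ m) with hL2
  have hL2fin : L2 ≠ ⊤ := (finite_L2 m c k t hm1 hm2 hc hk ht).ne
  refine ENNReal.toReal_mono hL2fin ?_
  -- substitution identities
  have hsubst1 : (∫⁻ y : EuclideanSpace ℝ (Fin N),
      ENNReal.ofReal (Real.exp (-c * ‖y‖ ^ k / t) * ‖x - y‖ ^ m)) = L1 := by
    rw [hL1]
    have := (Measure.measurePreserving_sub_left
      (volume : Measure (EuclideanSpace ℝ (Fin N))) x).lintegral_comp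
      (f := fun y => ENNReal.ofReal (Real.exp (-c * ‖y‖ ^ k / t) * ‖x - y‖ ^ m))
      (hm2'.ennreal_ofReal)
    rw [← this]
    refine lintegral_congr fun y => ?_
    simp only [sub_sub_cancel]
  have hsubst2 : (∫⁻ y : EuclideanSpace ℝ (Fin N),
      ENNReal.ofReal (Real.exp (-c * ‖x - y‖ ^ k / t) * ‖x - y‖ ^ m)) = L2 := by
    rw [hL2]
    exact (Measure.measurePreserving_sub_left
      (volume : Measure (EuclideanSpace ℝ (Fin N))) x).lintegral_comp
      (f := fun y => ENNReal.ofReal (Real.exp (-c * ‖y‖ ^ k / t) * ‖y‖ ^ m))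
      (hm3'.ennreal_ofReal)
  -- the symmetrization inequality
  have key0 : (∫⁻ y : EuclideanSpace ℝ (Fin N),
      (ENNReal.ofReal (Real.exp (-c * ‖x - y‖ ^ k / t) * ‖y‖ ^ m)
        + ENNReal.ofReal (Real.exp (-c * ‖y‖ ^ k / t) * ‖x - y‖ ^ m)))
      ≤ ∫⁻ y : EuclideanSpace ℝ (Fin N),
      (ENNReal.ofReal (Real.exp (-c * ‖y‖ ^ k / t) * ‖y‖ ^ m)
        + ENNReal.ofReal (Real.exp (-c * ‖x - y‖ ^ k / t) * ‖x - y‖ ^ m)) := by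
    refine lintegral_mono_ae ?_
    have h0 : ∀ᵐ (y : EuclideanSpace ℝ (Fin N)) ∂(volume), y ≠ 0 := by
      rw [ae_iff]
      simp only [ne_eq, not_not, setOf_eq_eq_singleton]
      exact measure_singleton 0
    have hx0 : ∀ᵐ (y : EuclideanSpace ℝ (Fin N)) ∂(volume), y ≠ x := by
      rw [ae_iff]
      simp only [ne_eq, not_not, setOf_eq_eq_singleton]
      exact measure_singleton x
    filter_upwards [h0, hx0] with y hy0 hyx
    rw [← ENNReal.ofReal_add (hnn _ _) (hnn _ _), ← ENNReal.ofReal_add (hnn _ _) (hnn _ _)]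
    refine ENNReal.ofReal_le_ofReal ?_
    have hA : 0 < ‖y‖ := norm_pos_iff.2 hy0
    have hB : 0 < ‖x - y‖ := norm_pos_iff.2 (sub_ne_zero.mpr (Ne.symm hyx))
    rcases le_total ‖y‖ ‖x - y‖ with hab | hab
    · exact aux_point c k t m hc hk ht hm2 hA hab
    · linarith [aux_point c k t m hc hk ht hm2 hB hab]
  have key : L1 + L1 ≤ L2 + L2 := by
    calc L1 + L1
        = L1 + ∫⁻ y : EuclideanSpace ℝ (Fin N),
            ENNReal.ofReal (Real.exp (-c * ‖y‖ ^ k / t) * ‖x - y‖ ^ m) :=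
          congrArg (fun z => L1 + z) hsubst1.symm
      _ = ∫⁻ y : EuclideanSpace ℝ (Fin N),
            (ENNReal.ofReal (Real.exp (-c * ‖x - y‖ ^ k / t) * ‖y‖ ^ m)
              + ENNReal.ofReal (Real.exp (-c * ‖y‖ ^ k / t) * ‖x - y‖ ^ m)) :=
          (lintegral_add_left hm1'.ennreal_ofReal _).symm
      _ ≤ ∫⁻ y : EuclideanSpace ℝ (Fin N),
            (ENNReal.ofReal (Real.exp (-c * ‖y‖ ^ k / t) * ‖y‖ ^ m)
              + ENNReal.ofReal (Real.exp (-c * ‖x - y‖ ^ k / t) * ‖x - y‖ ^ m)) := key0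
      _ = L2 + ∫⁻ y : EuclideanSpace ℝ (Fin N),
            ENNReal.ofReal (Real.exp (-c * ‖x - y‖ ^ k / t) * ‖x - y‖ ^ m) :=
          lintegral_add_left hm3'.ennreal_ofReal _
      _ = L2 + L2 := congrArg (fun z => L2 + z) hsubst2
  rw [← two_mul, ← two_mul] at key
  exact (ENNReal.mul_le_mul_iff_right (by norm_num) (by norm_num)).1 key

end Aux
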